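/- Let s ≥ 0 and let q̂ ∈ h^s(ℤ) with q̂(0) = 0. Define ϱ(n) := (1/π²) Σ_{j∈ℤ∖{±n}} q̂(n−j)q̂(n+j)/((n−j)(n+j)) for n ∈ ℕ. Then the series defining ϱ(n) converges absolutely for each n ≥ 1 and the sequence {ϱ(n)}_{n∈ℕ} belongs to h^{1+s}(ℕ), i.e., Σ_{n≥1}(1+2n)^{2(1+s)}|ϱ(n)|² < ∞. -/

import Mathlib

open scoped BigOperators

/-- Membership in the weighted space `h^σ(ℤ)` with weight `(1+2|k|)^σ`. -/
def memH (σ : ℝ) (a : ℤ → ℂ) : Prop :=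
  Summable fun k : ℤ => ((1 + 2 * |(k : ℝ)|) ^ σ) ^ 2 * ‖a k‖ ^ 2

/-- `ϱ(n) = (1/π²) Σ_{j ∈ ℤ∖{±n}} q̂(n−j) q̂(n+j) / ((n−j)(n+j))`. -/
noncomputable def rho (q : ℤ → ℂ) (n : ℤ) : ℂ :=
  (1 / (Real.pi : ℂ) ^ 2) *
    ∑' j : ℤ, if j = n ∨ j = -n then 0
      else q (n - j) * q (n + j) / (((n : ℂ) - (j : ℂ)) * ((n : ℂ) + (j : ℂ)))

/-- `b(k) = |q(k)|/|k|`. -/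
noncomputable def bb (q : ℤ → ℂ) (k : ℤ) : ℝ := ‖q k‖ / |(k : ℝ)|

/-- `c(k) = (1+2|k|)^s |q(k)|`. -/
noncomputable def cc (s : ℝ) (q : ℤ → ℂ) (k : ℤ) : ℝ :=
  (1 + 2 * |(k : ℝ)|) ^ s * ‖q k‖

lemma bb_nonneg (q : ℤ → ℂ) (k : ℤ) : 0 ≤ bb q k := by
  unfold bb; positivity

lemma cc_nonneg (s : ℝ) (q : ℤ → ℂ) (k : ℤ) : 0 ≤ cc s q k := by
  unfold cc; positivity

lemma base_one_le (k : ℤ) : (1:ℝ) ≤ 1 + 2 * |(k : ℝ)| := by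
  have : (0:ℝ) ≤ |(k:ℝ)| := abs_nonneg _
  linarith

lemma bb_le_abs (q : ℤ → ℂ) (k : ℤ) : bb q k ≤ ‖q k‖ := by
  unfold bb
  rcases eq_or_ne k 0 with rfl | hk
  · simp [norm_nonneg]
  · have h1 : (1:ℝ) ≤ |(k:ℝ)| := by
      rcases Int.one_le_abs (by simpa using hk) with h
      calc (1:ℝ) = ((1:ℤ):ℝ) := by norm_num
        _ ≤ ((|k|:ℤ):ℝ) := by exact_mod_cast h
        _ = |(k:ℝ)| := by push_cast; ring
    exact div_le_self (norm_nonneg _) h1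

lemma mul_le_half_sq (a b : ℝ) : a * b ≤ (a^2 + b^2)/2 := by
  nlinarith [sq_nonneg (a - b)]

section facts
variable (s : ℝ) (hs : 0 ≤ s) (q : ℤ → ℂ) (hq0 : q 0 = 0) (hq : memH s q)

include hq in
lemma hc2 : Summable fun k => cc s q k ^ 2 := by
  apply hq.congr; intro k; rw [cc, mul_pow]

include hs hq in
lemma hq2 : Summable fun k => ‖q k‖ ^ 2 := by
  apply Summable.of_nonneg_of_le (fun k => by positivity) _ (hc2 s q hq)
  intro k
  have h1 : (1:ℝ) ≤ (1 + 2 * |(k:ℝ)|) ^ s := Real.one_le_rpow (base_one_le k) hs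
  calc ‖q k‖ ^ 2 = 1 * ‖q k‖ ^ 2 := (one_mul _).symm
    _ ≤ ((1 + 2*|(k:ℝ)|) ^ s)^2 * ‖q k‖ ^ 2 := by
        apply mul_le_mul_of_nonneg_right _ (by positivity)
        nlinarith
    _ = cc s q k ^ 2 := by rw [cc, mul_pow]

include hs hq in
lemma hb2 : Summable fun k => bb q k ^ 2 := by
  apply Summable.of_nonneg_of_le (fun k => by positivity) _ (hq2 s hs q hq)
  intro k
  exact pow_le_pow_left₀ (bb_nonneg q k) (bb_le_abs q k) 2

include hs hq in
lemma hb1 : Summable (bb q) := by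
  have hinv : Summable fun k : ℤ => (1 / |(k:ℝ)|)^2 := by
    have := Real.summable_one_div_int_pow.2 (by norm_num : 1 < 2)
    apply this.congr; intro k; rw [div_pow, one_pow, sq_abs]
  apply Summable.of_nonneg_of_le (bb_nonneg q)
    (fun k => ?_) (((hq2 s hs q hq).add hinv).div_const 2)
  have : bb q k = ‖q k‖ * (1 / |(k:ℝ)|) := by
    rw [bb, div_eq_mul_one_div]
  rw [this]
  exact mul_le_half_sq _ _

end facts

/-- Pointwise identity for the summand. -/
lemma summand_eq (q : ℤ → ℂ) (hq0 : q 0 = 0) (n j : ℤ) :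
    ‖if j = n ∨ j = -n then 0
      else q (n - j) * q (n + j) / (((n : ℂ) - (j : ℂ)) * ((n : ℂ) + (j : ℂ)))‖
    = bb q (n - j) * bb q (n + j) := by
  rcases eq_or_ne j n with rfl | h1
  · simp [bb, hq0]
  rcases eq_or_ne j (-n) with rfl | h2
  · simp [bb, hq0, add_neg_cancel]
  rw [if_neg (by simp [h1, h2])]
  have e1 : ((n : ℂ) - (j : ℂ)) = ((n - j : ℤ) : ℂ) := by push_cast; ring
  have e2 : ((n : ℂ) + (j : ℂ)) = ((n + j : ℤ) : ℂ) := by push_cast; ring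
  rw [e1, e2, norm_div, norm_mul, norm_mul, Complex.norm_intCast, Complex.norm_intCast]
  rw [bb, bb]
  push_cast
  ring

/-- Key summability of products of shifts. -/
lemma summable_mul_shift (f g : ℤ → ℝ) (hf : ∀ k, 0 ≤ f k) (hg : ∀ k, 0 ≤ g k)
    (hf2 : Summable fun k => f k ^ 2) (hg2 : Summable fun k => g k ^ 2) (m : ℤ) :
    Summable fun j => f (m - j) * g (m + j) := by
  have h1 : Summable fun j : ℤ => f (m - j) ^ 2 :=
    hf2.comp_injective (fun a b h => by omega)
  have h2 : Summable fun j : ℤ => g (m + j) ^ 2 :=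
    hg2.comp_injective (fun a b h => by omega)
  apply Summable.of_nonneg_of_le (fun j => mul_nonneg (hf _) (hg _))
    (fun j => mul_le_half_sq _ _) ((h1.add h2).div_const 2)

/-- Cauchy–Schwarz for tsums of nonnegative sequences. -/
lemma tsum_cs (u v : ℤ → ℝ) (hu : ∀ j, 0 ≤ u j) (hv : ∀ j, 0 ≤ v j)
    (h2u : Summable fun j => u j ^ 2) (h2v : Summable fun j => v j ^ 2)
    (huv : Summable fun j => u j * v j) :
    (∑' j, u j * v j) ^ 2 ≤ (∑' j, u j ^ 2) * (∑' j, v j ^ 2) := by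
  have hA : (0:ℝ) ≤ (∑' j, u j ^ 2) * (∑' j, v j ^ 2) :=
    mul_nonneg (tsum_nonneg fun j => sq_nonneg _) (tsum_nonneg fun j => sq_nonneg _)
  have key : (∑' j, u j * v j) ≤ Real.sqrt ((∑' j, u j ^ 2) * (∑' j, v j ^ 2)) := by
    apply Summable.tsum_le_of_sum_le huv
    intro t
    rw [Real.le_sqrt (Finset.sum_nonneg fun j _ => mul_nonneg (hu j) (hv j))]
    calc (∑ j ∈ t, u j * v j) ^ 2 ≤ (∑ j ∈ t, u j ^ 2) * (∑ j ∈ t, v j ^ 2) :=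
          Finset.sum_mul_sq_le_sq_mul_sq t u v
      _ ≤ (∑' j, u j ^ 2) * (∑' j, v j ^ 2) := by
          exact mul_le_mul (Summable.sum_le_tsum t (fun j _ => sq_nonneg _) h2u)
            (Summable.sum_le_tsum t (fun j _ => sq_nonneg _) h2v)
            (Finset.sum_nonneg fun j _ => sq_nonneg _)
            (tsum_nonneg fun j => sq_nonneg _)
    · exact hA
  calc (∑' j, u j * v j) ^ 2 ≤ Real.sqrt ((∑' j, u j ^ 2) * (∑' j, v j ^ 2)) ^ 2 := by
        apply pow_le_pow_left₀ (tsum_nonneg fun j => mul_nonneg (hu j) (hv j)) key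
    _ = _ := Real.sq_sqrt hA


lemma one_le_abs_cast {k : ℤ} (hk : k ≠ 0) : (1:ℝ) ≤ |(k:ℝ)| := by
  have h := Int.one_le_abs (by simpa using hk)
  calc (1:ℝ) = ((1:ℤ):ℝ) := by norm_num
    _ ≤ ((|k|:ℤ):ℝ) := by exact_mod_cast h
    _ = |(k:ℝ)| := by push_cast; ring

lemma weight_split (s : ℝ) (hs : 0 ≤ s) (m j : ℤ) (hm : 1 ≤ m) :
    (1 + 2*(m:ℝ)) ^ (1+s) ≤
      (1 + 2*|((m - j : ℤ):ℝ)|) ^ (1+s) + (1 + 2*|((m + j : ℤ):ℝ)|) ^ (1+s) := by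
  have h1s : (0:ℝ) ≤ 1 + s := by linarith
  have hm' : (1:ℝ) ≤ (m:ℝ) := by exact_mod_cast hm
  have habs : (2:ℝ)*(m:ℝ) ≤ |((m-j:ℤ):ℝ)| + |((m+j:ℤ):ℝ)| := by
    have h2 : |(((m-j:ℤ)):ℝ) + (((m+j:ℤ)):ℝ)| ≤ |((m-j:ℤ):ℝ)| + |((m+j:ℤ):ℝ)| := abs_add_le _ _
    have h3 : (((m-j:ℤ)):ℝ) + (((m+j:ℤ)):ℝ) = 2*(m:ℝ) := by push_cast; ring
    rw [h3, abs_of_nonneg (by linarith)] at h2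
    exact h2
  rcases le_total (|((m-j:ℤ):ℝ)|) (|((m+j:ℤ):ℝ)|) with h | h
  · have hle : (1:ℝ) + 2*(m:ℝ) ≤ 1 + 2*|((m+j:ℤ):ℝ)| := by linarith
    have h4 := Real.rpow_le_rpow (by linarith : (0:ℝ) ≤ 1 + 2*(m:ℝ)) hle h1s
    have h5 : (0:ℝ) ≤ (1 + 2*|((m-j:ℤ):ℝ)|)^(1+s) := Real.rpow_nonneg (by positivity) _
    linarith
  · have hle : (1:ℝ) + 2*(m:ℝ) ≤ 1 + 2*|((m-j:ℤ):ℝ)| := by linarith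
    have h4 := Real.rpow_le_rpow (by linarith : (0:ℝ) ≤ 1 + 2*(m:ℝ)) hle h1s
    have h5 : (0:ℝ) ≤ (1 + 2*|((m+j:ℤ):ℝ)|)^(1+s) := Real.rpow_nonneg (by positivity) _
    linarith

lemma cb_bound (s : ℝ) (hs : 0 ≤ s) (q : ℤ → ℂ) (k : ℤ) :
    (1 + 2*|(k:ℝ)|) ^ (1+s) * bb q k ≤ 3 * cc s q k := by
  rcases eq_or_ne k 0 with rfl | hk
  · have h1 : bb q 0 = 0 := by simp [bb]
    rw [h1, mul_zero]
    have := cc_nonneg s q 0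
    linarith
  · have hk1 : (1:ℝ) ≤ |(k:ℝ)| := one_le_abs_cast hk
    have hne : |(k:ℝ)| ≠ 0 := by linarith
    have hb : (0:ℝ) < 1 + 2*|(k:ℝ)| := by linarith
    have hsplit : (1 + 2*|(k:ℝ)|)^(1+s) = (1 + 2*|(k:ℝ)|) * (1 + 2*|(k:ℝ)|)^s := by
      rw [Real.rpow_add hb, Real.rpow_one]
    rw [hsplit, bb, cc]
    have h2 : (1 + 2*|(k:ℝ)|) * (‖q k‖ / |(k:ℝ)|) ≤ 3 * ‖q k‖ := by
      have h3 : (1 + 2*|(k:ℝ)|) ≤ 3 * |(k:ℝ)| := by linarith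
      calc (1 + 2*|(k:ℝ)|) * (‖q k‖ / |(k:ℝ)|)
          ≤ 3*|(k:ℝ)| * (‖q k‖ / |(k:ℝ)|) :=
            mul_le_mul_of_nonneg_right h3 (by positivity)
        _ = 3 * ‖q k‖ := by field_simp
    calc (1 + 2*|(k:ℝ)|) * (1 + 2*|(k:ℝ)|)^s * (‖q k‖ / |(k:ℝ)|)
        = (1 + 2*|(k:ℝ)|)^s * ((1 + 2*|(k:ℝ)|) * (‖q k‖ / |(k:ℝ)|)) := by ring
      _ ≤ (1 + 2*|(k:ℝ)|)^s * (3 * ‖q k‖) :=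
          mul_le_mul_of_nonneg_left h2 (Real.rpow_nonneg (by positivity) _)
      _ = 3 * ((1 + 2*|(k:ℝ)|)^s * ‖q k‖) := by ring

/-- The correction terms `ϱ(n)` form a sequence in `h^{1+s}(ℕ)`. -/
theorem rho_in_h_one_plus_s (s : ℝ) (hs : 0 ≤ s) (q : ℤ → ℂ) (hq0 : q 0 = 0)
    (hq : memH s q) :
    (∀ n : ℤ, 1 ≤ n → Summable fun j : ℤ =>
      ‖if j = n ∨ j = -n then 0
        else q (n - j) * q (n + j) / (((n : ℂ) - (j : ℂ)) * ((n : ℂ) + (j : ℂ)))‖) ∧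
    Summable (fun n : ℕ =>
      ((1 + 2 * ((n : ℝ) + 1)) ^ (2 * (1 + s))) * ‖rho q ((n : ℤ) + 1)‖ ^ 2) := by
  have hb1' : Summable (bb q) := hb1 s hs q hq
  have hb2' : Summable fun k => bb q k ^ 2 := hb2 s hs q hq
  have hc2' : Summable fun k => cc s q k ^ 2 := hc2 s q hq
  have part1 : ∀ n : ℤ, Summable fun j : ℤ =>
      ‖if j = n ∨ j = -n then 0
        else q (n - j) * q (n + j) / (((n : ℂ) - (j : ℂ)) * ((n : ℂ) + (j : ℂ)))‖ := by
    intro n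
    exact (summable_mul_shift (bb q) (bb q) (bb_nonneg q) (bb_nonneg q) hb2' hb2' n).congr
      fun j => (summand_eq q hq0 n j).symm
  refine ⟨fun n _ => part1 n, ?_⟩
  set C : ℝ := ∑' k, bb q k with hC
  have hC0 : 0 ≤ C := tsum_nonneg (bb_nonneg q)
  set D : ℝ := ∑' k, cc s q k ^ 2 with hD
  have hD0 : 0 ≤ D := tsum_nonneg fun k => sq_nonneg _
  have hGsum : ∀ m : ℤ, Summable fun j => cc s q (m - j) * bb q (m + j) :=
    fun m => summable_mul_shift _ _ (cc_nonneg s q) (bb_nonneg q) hc2' hb2' m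
  have hGsum' : ∀ m : ℤ, Summable fun j => bb q (m - j) * cc s q (m + j) :=
    fun m => summable_mul_shift _ _ (bb_nonneg q) (cc_nonneg s q) hb2' hc2' m
  have hswap : ∀ m : ℤ, (∑' j, bb q (m - j) * cc s q (m + j))
      = ∑' j, cc s q (m - j) * bb q (m + j) := by
    intro m
    have h := (Equiv.neg ℤ).tsum_eq (fun j => cc s q (m - j) * bb q (m + j))
    simp only [Equiv.neg_apply] at h
    rw [← h]
    apply tsum_congr
    intro j
    rw [sub_neg_eq_add, ← sub_eq_add_neg]
    ring
  -- bound on |rho|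
  have hrho : ∀ m : ℤ, ‖rho q m‖
      ≤ (1 / Real.pi^2) * ∑' j, bb q (m - j) * bb q (m + j) := by
    intro m
    rw [rho, norm_mul]
    have h1 : ‖1 / (Real.pi:ℂ)^2‖ = 1 / Real.pi^2 := by
      rw [norm_div, norm_one, norm_pow, Complex.norm_real, Real.norm_eq_abs, abs_of_pos Real.pi_pos]
    rw [h1]
    apply mul_le_mul_of_nonneg_left _ (by positivity)
    have hnorm : Summable fun j : ℤ => ‖(if j = m ∨ j = -m then 0
        else q (m - j) * q (m + j) / (((m : ℂ) - (j : ℂ)) * ((m : ℂ) + (j : ℂ))))‖ :=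
      (part1 m).congr fun j => rfl
    calc ‖∑' j : ℤ, (if j = m ∨ j = -m then 0
          else q (m - j) * q (m + j) / (((m : ℂ) - (j : ℂ)) * ((m : ℂ) + (j : ℂ))))‖
        = ‖∑' j : ℤ, (if j = m ∨ j = -m then 0
          else q (m - j) * q (m + j) / (((m : ℂ) - (j : ℂ)) * ((m : ℂ) + (j : ℂ))))‖ :=
          rfl
      _ ≤ ∑' j : ℤ, ‖(if j = m ∨ j = -m then 0
          else q (m - j) * q (m + j) / (((m : ℂ) - (j : ℂ)) * ((m : ℂ) + (j : ℂ))))‖ :=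
          norm_tsum_le_tsum_norm hnorm
      _ = ∑' j, bb q (m - j) * bb q (m + j) := tsum_congr fun j => by
          exact summand_eq q hq0 m j
  -- weighted bound
  have hwT : ∀ m : ℤ, 1 ≤ m → (1 + 2*(m:ℝ))^(1+s) * (∑' j, bb q (m - j) * bb q (m + j))
      ≤ 6 * ∑' j, cc s q (m - j) * bb q (m + j) := by
    intro m hm
    rw [← tsum_mul_left]
    have hRS : Summable fun j => 3 * (cc s q (m - j) * bb q (m + j))
        + 3 * (bb q (m - j) * cc s q (m + j)) :=
      ((hGsum m).mul_left 3).add ((hGsum' m).mul_left 3)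
    have hLS : Summable fun j => (1 + 2*(m:ℝ))^(1+s) * (bb q (m - j) * bb q (m + j)) :=
      (summable_mul_shift _ _ (bb_nonneg q) (bb_nonneg q) hb2' hb2' m).mul_left _
    calc ∑' j, (1 + 2*(m:ℝ))^(1+s) * (bb q (m - j) * bb q (m + j))
        ≤ ∑' j, (3 * (cc s q (m - j) * bb q (m + j)) + 3 * (bb q (m - j) * cc s q (m + j))) := by
          apply Summable.tsum_le_tsum _ hLS hRS
          intro j
          have hw := weight_split s hs m j hm
          have h1 := cb_bound s hs q (m - j)
          have h2 := cb_bound s hs q (m + j)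
          have hb1n := bb_nonneg q (m - j)
          have hb2n := bb_nonneg q (m + j)
          have hW1 : (0:ℝ) ≤ (1 + 2*|((m - j : ℤ):ℝ)|)^(1+s) := Real.rpow_nonneg (by positivity) _
          have hW2 : (0:ℝ) ≤ (1 + 2*|((m + j : ℤ):ℝ)|)^(1+s) := Real.rpow_nonneg (by positivity) _
          nlinarith [mul_le_mul_of_nonneg_right h1 hb2n, mul_le_mul_of_nonneg_right h2 hb1n,
            mul_le_mul_of_nonneg_right hw (mul_nonneg hb1n hb2n)]
      _ = 3 * (∑' j, cc s q (m - j) * bb q (m + j))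
          + 3 * (∑' j, bb q (m - j) * cc s q (m + j)) := by
          rw [Summable.tsum_add ((hGsum m).mul_left 3) ((hGsum' m).mul_left 3), tsum_mul_left, tsum_mul_left]
      _ = 6 * ∑' j, cc s q (m - j) * bb q (m + j) := by rw [hswap m]; ring
  -- Cauchy-Schwarz step
  have hGH : ∀ m : ℤ, (∑' j, cc s q (m - j) * bb q (m + j)) ^ 2
      ≤ C * ∑' k, cc s q (2*m - k) ^ 2 * bb q k := by
    intro m
    have h2v : Summable fun j : ℤ => bb q (m + j) :=
      hb1'.comp_injective (add_right_injective m)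
    have hble : ∀ k, bb q k ≤ C := fun k => Summable.le_tsum hb1' k (fun j _ => bb_nonneg q j)
    have h2u : Summable fun j : ℤ => cc s q (m - j)^2 * bb q (m + j) := by
      apply Summable.of_nonneg_of_le
        (fun j => mul_nonneg (sq_nonneg _) (bb_nonneg _ _)) _
        (((hc2'.comp_injective (sub_right_injective :
          Function.Injective fun j : ℤ => m - j))).mul_left C)
      intro j
      calc cc s q (m - j)^2 * bb q (m + j) ≤ cc s q (m - j)^2 * C :=
            mul_le_mul_of_nonneg_left (hble _) (sq_nonneg _)
        _ = C * cc s q (m - j)^2 := mul_comm _ _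
    have key := tsum_cs (fun j => cc s q (m - j) * Real.sqrt (bb q (m + j)))
        (fun j => Real.sqrt (bb q (m + j)))
        (fun j => mul_nonneg (cc_nonneg _ _ _) (Real.sqrt_nonneg _))
        (fun j => Real.sqrt_nonneg _)
        (h2u.congr fun j => by rw [mul_pow, Real.sq_sqrt (bb_nonneg q _)])
        (h2v.congr fun j => by rw [Real.sq_sqrt (bb_nonneg q _)])
        ((hGsum m).congr fun j => by rw [mul_assoc, Real.mul_self_sqrt (bb_nonneg q _)])
    have e1 : (∑' j, (cc s q (m - j) * Real.sqrt (bb q (m + j))) * Real.sqrt (bb q (m + j)))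
        = ∑' j, cc s q (m - j) * bb q (m + j) :=
      tsum_congr fun j => by rw [mul_assoc, Real.mul_self_sqrt (bb_nonneg q _)]
    have e2 : (∑' j, (cc s q (m - j) * Real.sqrt (bb q (m + j)))^2)
        = ∑' j, cc s q (m - j)^2 * bb q (m + j) :=
      tsum_congr fun j => by rw [mul_pow, Real.sq_sqrt (bb_nonneg q _)]
    have e3 : (∑' j, (Real.sqrt (bb q (m + j)))^2) = C := by
      rw [tsum_congr fun j => Real.sq_sqrt (bb_nonneg q (m + j))]
      have h := (Equiv.addLeft m).tsum_eq (bb q)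
      simp only [Equiv.coe_addLeft] at h
      rw [hC]
      exact h
    have e4 : (∑' j, cc s q (m - j)^2 * bb q (m + j)) = ∑' k, cc s q (2*m - k) ^ 2 * bb q k := by
      have h := (Equiv.subRight m).tsum_eq (fun j => cc s q (m - j)^2 * bb q (m + j))
      simp only [Equiv.subRight_apply] at h
      rw [← h]
      apply tsum_congr
      intro k
      have a1 : m - (k - m) = 2*m - k := by ring
      have a2 : m + (k - m) = k := by ring
      rw [a1, a2]
    rw [e1, e2, e3, e4] at key
    calc (∑' j, cc s q (m - j) * bb q (m + j)) ^ 2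
        ≤ (∑' k, cc s q (2*m - k) ^ 2 * bb q k) * C := key
      _ = C * ∑' k, cc s q (2*m - k) ^ 2 * bb q k := mul_comm _ _
  -- summability of the majorant
  have hHsum : Summable (fun n : ℕ => ∑' k, cc s q (2*((n:ℤ)+1) - k) ^ 2 * bb q k) := by
    have hinj : ∀ k : ℤ, Function.Injective (fun n : ℕ => 2*((n:ℤ)+1) - k) := by
      intro k a b h
      simp only at h
      omega
    have hginner : ∀ k : ℤ, Summable (fun n : ℕ => cc s q (2*((n:ℤ)+1) - k)^2 * bb q k) :=
      fun k => (hc2'.comp_injective (hinj k)).mul_right _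
    have houter : Summable (fun k : ℤ => ∑' n : ℕ, cc s q (2*((n:ℤ)+1) - k)^2 * bb q k) := by
      apply Summable.of_nonneg_of_le
        (fun k => tsum_nonneg fun n => mul_nonneg (sq_nonneg _) (bb_nonneg q _)) _
        (hb1'.mul_left D)
      intro k
      rw [tsum_mul_right]
      apply mul_le_mul_of_nonneg_right _ (bb_nonneg q k)
      apply Summable.tsum_le_of_sum_le (hc2'.comp_injective (hinj k))
      intro t
      calc ∑ n ∈ t, cc s q (2*((n:ℤ)+1) - k)^2
          = ∑ x ∈ t.map ⟨fun n : ℕ => 2*((n:ℤ)+1) - k, hinj k⟩, cc s q x ^ 2 :=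
            (Finset.sum_map t ⟨fun n : ℕ => 2*((n:ℤ)+1) - k, hinj k⟩
              (fun i : ℤ => cc s q i ^ 2)).symm
        _ ≤ D := Summable.sum_le_tsum _ (fun i _ => sq_nonneg _) hc2'
    have hprod : Summable (fun p : ℤ × ℕ => cc s q (2*((p.2:ℤ)+1) - p.1)^2 * bb q p.1) := by
      have hnn : 0 ≤ (fun p : ℤ × ℕ => cc s q (2*((p.2:ℤ)+1) - p.1)^2 * bb q p.1) :=
        fun p => mul_nonneg (sq_nonneg _) (bb_nonneg q _)
      exact (summable_prod_of_nonneg hnn).2 ⟨hginner, houter⟩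
    have hswapped : Summable (fun p : ℕ × ℤ => cc s q (2*((p.1:ℤ)+1) - p.2)^2 * bb q p.2) :=
      hprod.prod_symm
    exact hswapped.prod
  -- final comparison
  apply Summable.of_nonneg_of_le _ _ (hHsum.mul_left (36 * C / (Real.pi^2)^2))
  · intro n
    positivity
  · intro n
    have hm : (1:ℤ) ≤ (n:ℤ) + 1 := by omega
    have hcast : (((n:ℤ) + 1 : ℤ):ℝ) = (n:ℝ) + 1 := by push_cast; ring
    have hx : (0:ℝ) ≤ 1 + 2*((n:ℝ)+1) := by positivity
    have hW2 : (1 + 2*((n:ℝ)+1)) ^ (2*(1+s)) = ((1 + 2*((n:ℝ)+1)) ^ (1+s))^2 := by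
      rw [mul_comm (2:ℝ) (1+s), Real.rpow_mul hx, Real.rpow_two]
    rw [hW2, ← mul_pow]
    have hstep : (1 + 2*((n:ℝ)+1))^(1+s) * ‖rho q ((n:ℤ)+1)‖
        ≤ (6 / Real.pi^2) * ∑' j, cc s q (((n:ℤ)+1) - j) * bb q (((n:ℤ)+1) + j) := by
      have h1 := hrho ((n:ℤ)+1)
      have h2 := hwT ((n:ℤ)+1) hm
      rw [hcast] at h2
      calc (1 + 2*((n:ℝ)+1))^(1+s) * ‖rho q ((n:ℤ)+1)‖
          ≤ (1 + 2*((n:ℝ)+1))^(1+s) *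
            ((1/Real.pi^2) * ∑' j, bb q (((n:ℤ)+1) - j) * bb q (((n:ℤ)+1) + j)) :=
            mul_le_mul_of_nonneg_left h1 (Real.rpow_nonneg hx _)
        _ = (1/Real.pi^2) * ((1 + 2*((n:ℝ)+1))^(1+s)
            * ∑' j, bb q (((n:ℤ)+1) - j) * bb q (((n:ℤ)+1) + j)) := by ring
        _ ≤ (1/Real.pi^2) * (6 * ∑' j, cc s q (((n:ℤ)+1) - j) * bb q (((n:ℤ)+1) + j)) :=
            mul_le_mul_of_nonneg_left h2 (by positivity)
        _ = (6 / Real.pi^2) * ∑' j, cc s q (((n:ℤ)+1) - j) * bb q (((n:ℤ)+1) + j) := by ring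
    have hGnn : (0:ℝ) ≤ ∑' j, cc s q (((n:ℤ)+1) - j) * bb q (((n:ℤ)+1) + j) :=
      tsum_nonneg fun j => mul_nonneg (cc_nonneg _ _ _) (bb_nonneg _ _)
    calc ((1 + 2*((n:ℝ)+1))^(1+s) * ‖rho q ((n:ℤ)+1)‖)^2
        ≤ ((6 / Real.pi^2) * ∑' j, cc s q (((n:ℤ)+1) - j) * bb q (((n:ℤ)+1) + j))^2 :=
          pow_le_pow_left₀
            (mul_nonneg (Real.rpow_nonneg hx _) (norm_nonneg _)) hstep 2
      _ = (6 / Real.pi^2)^2 * (∑' j, cc s q (((n:ℤ)+1) - j) * bb q (((n:ℤ)+1) + j))^2 := by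
          ring
      _ ≤ (6 / Real.pi^2)^2 * (C * ∑' k, cc s q (2*((n:ℤ)+1) - k) ^ 2 * bb q k) :=
          mul_le_mul_of_nonneg_left (hGH ((n:ℤ)+1)) (by positivity)
      _ = 36 * C / (Real.pi^2)^2 * ∑' k, cc s q (2*((n:ℤ)+1) - k) ^ 2 * bb q k := by
          ring
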